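/- arXiv:2104.14573 — 2 statements merged into one kernel-verified Lean document; each statement's English description precedes it below -/
import Mathlib

section
/- Let M > 0 and 0 ≤ s < 1/M. For every x ∈ ℝ there exists a unique y ∈ ℝ satisfying h(y) + h(x + y) = h(x)·(1 − M s). Moreover y = 0 whenever x = 0 or s = 0; if x > 0 and s > 0 then −x < y < 0; and if x < 0 and s > 0 then 0 < y < −x. In particular, for x ≠ 0 and s > 0 one has x·y < 0 and x·(x + y) > 0. -/
/-- The function `h` used to parametrize rarefaction (`ε ≥ 0`) and shock (`ε < 0`)
branches of the wave curves of the isothermal p-system. -/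
noncomputable def waveH (ε : ℝ) : ℝ := if 0 ≤ ε then ε else Real.sinh ε

lemma waveH_eq_min (ε : ℝ) : waveH ε = min ε (Real.sinh ε) := by
  unfold waveH
  rcases lt_trichotomy ε 0 with h | h | h
  · rw [if_neg (not_le.2 h), min_eq_right]
    have := Real.self_lt_sinh_iff.2 (show (0:ℝ) < -ε by linarith)
    rw [Real.sinh_neg] at this; linarith
  · simp [h]
  · rw [if_pos h.le, min_eq_left (Real.self_lt_sinh_iff.2 h).le]

lemma waveH_zero : waveH 0 = 0 := by simp [waveH]

lemma waveH_strictMono : StrictMono waveH := by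
  intro a b hab
  rw [waveH_eq_min, waveH_eq_min]
  exact lt_min ((min_le_left _ _).trans_lt hab)
    ((min_le_right _ _).trans_lt (Real.sinh_strictMono hab))

lemma waveH_continuous : Continuous waveH := by
  have : Continuous fun ε : ℝ => min ε (Real.sinh ε) :=
    continuous_id.min Real.continuous_sinh
  simpa [funext waveH_eq_min] using this

lemma waveH_tendsto_atTop : Filter.Tendsto waveH Filter.atTop Filter.atTop := by
  have h : ∀ ε : ℝ, waveH ε ≤ Real.sinh ε ∨ True := fun _ => Or.inr trivial
  refine Filter.tendsto_atTop_mono' _ ?_ Filter.tendsto_id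
  filter_upwards [Filter.eventually_ge_atTop (0:ℝ)] with ε hε
  simp [waveH, hε]

lemma waveH_tendsto_atBot : Filter.Tendsto waveH Filter.atBot Filter.atBot := by
  refine Filter.tendsto_atBot_mono (fun ε => ?_) Filter.tendsto_id
  rw [waveH_eq_min]; exact min_le_left _ _

lemma waveH_pos {ε : ℝ} (h : 0 < ε) : 0 < waveH ε := by
  simpa [waveH_zero] using waveH_strictMono h

lemma waveH_neg {ε : ℝ} (h : ε < 0) : waveH ε < 0 := by
  simpa [waveH_zero] using waveH_strictMono h

/-- for `M > 0`, `0 ≤ s < 1/M` and every `x`, the time-step equation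
`h(y) + h(x+y) = h(x)(1 - Ms)` has a unique solution `y`, which moreover
satisfies the stated sign rules. -/
theorem time_step_reflected_wave_exists_unique (M s : ℝ) (hM : 0 < M)
    (hs : 0 ≤ s) (hs' : s < 1 / M) (x : ℝ) :
    (∃! y : ℝ, waveH y + waveH (x + y) = waveH x * (1 - M * s)) ∧
    (∀ y : ℝ, waveH y + waveH (x + y) = waveH x * (1 - M * s) →
      ((x = 0 ∨ s = 0) → y = 0) ∧
      (0 < x → 0 < s → -x < y ∧ y < 0) ∧
      (x < 0 → 0 < s → 0 < y ∧ y < -x) ∧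
      (x ≠ 0 → 0 < s → x * y < 0 ∧ 0 < x * (x + y))) := by
  have hMs : M * s < 1 := by
    have := (lt_div_iff₀ hM).1 hs'
    linarith [this]
  have hMs0 : 0 ≤ M * s := mul_nonneg hM.le hs
  set F : ℝ → ℝ := fun y => waveH y + waveH (x + y) with hF
  have hFmono : StrictMono F :=
    waveH_strictMono.add (waveH_strictMono.comp fun a b hab => by linarith)
  have hFcont : Continuous F :=
    waveH_continuous.add (waveH_continuous.comp (continuous_const.add continuous_id))
  have hFtop : Filter.Tendsto F Filter.atTop Filter.atTop :=
    Filter.Tendsto.atTop_add_atTop waveH_tendsto_atTop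
      (waveH_tendsto_atTop.comp (Filter.tendsto_atTop_add_const_left _ _ Filter.tendsto_id))
  have hFbot : Filter.Tendsto F Filter.atBot Filter.atBot :=
    Filter.Tendsto.atBot_add_atBot waveH_tendsto_atBot
      (waveH_tendsto_atBot.comp (Filter.tendsto_atBot_add_const_left _ _ Filter.tendsto_id))
  have hsurj : Function.Surjective F := hFcont.surjective hFtop hFbot
  obtain ⟨y₀, hy₀⟩ := hsurj (waveH x * (1 - M * s))
  have hF0 : F 0 = waveH x := by simp [hF, waveH_zero]
  have hFnx : F (-x) = waveH (-x) := by simp [hF, waveH_zero]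
  constructor
  · exact ⟨y₀, hy₀, fun z hz => hFmono.injective (hz.trans hy₀.symm)⟩
  · intro y hy
    have key : ∀ a b : ℝ, F a < F b → a < b := fun a b h => hFmono.lt_iff_lt.1 h
    have hFy : F y = waveH x * (1 - M * s) := hy
    have hpos : ∀ (hx : 0 < x) (hs0 : 0 < s), -x < y ∧ y < 0 := by
      intro hx hs0
      have hwx : 0 < waveH x := waveH_pos hx
      have hMs0' : 0 < M * s := mul_pos hM hs0
      have h1 : F y < F 0 := by
        rw [hFy, hF0]; nlinarith
      have h2 : F (-x) < F y := by
        rw [hFy, hFnx]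
        have : waveH (-x) < 0 := waveH_neg (by linarith)
        nlinarith
      exact ⟨key _ _ h2, key _ _ h1⟩
    have hneg : ∀ (hx : x < 0) (hs0 : 0 < s), 0 < y ∧ y < -x := by
      intro hx hs0
      have hwx : waveH x < 0 := waveH_neg hx
      have hMs0' : 0 < M * s := mul_pos hM hs0
      have h1 : F 0 < F y := by
        rw [hFy, hF0]; nlinarith
      have h2 : F y < F (-x) := by
        rw [hFy, hFnx]
        have : 0 < waveH (-x) := waveH_pos (by linarith)
        nlinarith
      exact ⟨key _ _ h1, key _ _ h2⟩
    refine ⟨?_, hpos, hneg, ?_⟩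
    · rintro (rfl | rfl)
      · apply hFmono.injective
        rw [hFy, hF0, waveH_zero]; ring
      · apply hFmono.injective
        rw [hFy, hF0]; ring
    · intro hx hs0
      rcases hx.lt_or_gt with h | h
      · obtain ⟨h1, h2⟩ := hneg h hs0
        constructor <;> nlinarith
      · obtain ⟨h1, h2⟩ := hpos h hs0
        constructor <;> nlinarith
end

section
/- Let q > 0 and set c(q) = (cosh q − 1)/(cosh q + 1). Let α < 0 < β with |α| ≤ q and β ≤ q, and suppose ε₁, ε₂ ∈ ℝ satisfy ε₂ − ε₁ = α + β and h(ε₁) + h(ε₂) = h(α) + h(β). Then the reflected wave is a shock, i.e. ε₁ < 0, and |ε₁| ≤ c(q)·min{|α|, β}. Moreover the amounts of shocks and of rarefactions of the incoming family decrease across the interaction: if ε₂ ≤ 0 then |ε₂| < |α|, and if ε₂ ≥ 0 then ε₂ < β. -/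
/-- `sinh u ≤ u * cosh u` for `0 ≤ u`. -/
lemma sinh_le_mul_cosh {u : ℝ} (hu : 0 ≤ u) : Real.sinh u ≤ u * Real.cosh u := by
  have hF : ∀ x : ℝ, HasDerivAt (fun t => t * Real.cosh t - Real.sinh t)
      (x * Real.sinh x) x := by
    intro x
    have h1 := (hasDerivAt_id x).mul (Real.hasDerivAt_cosh x)
    have h2 := Real.hasDerivAt_sinh x
    exact (h1.sub h2).congr_deriv (by simp only [id_eq]; ring)
  have hmono : Monotone (fun t => t * Real.cosh t - Real.sinh t) := by
    apply monotone_of_deriv_nonneg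
    · exact fun x => (hF x).differentiableAt
    · intro x
      rw [(hF x).deriv]
      rcases le_total 0 x with h | h
      · exact mul_nonneg h (Real.sinh_nonneg_iff.2 h)
      · nlinarith [mul_nonneg (neg_nonneg.2 h) (neg_nonneg.2 (Real.sinh_nonpos_iff.2 h))]
  have := hmono hu
  simp only [Real.sinh_zero, Real.cosh_zero, mul_one, zero_mul, sub_zero] at this
  linarith

/-- A mean-value type estimate for `sinh` on `[-M, M]`. -/
lemma sinh_sub_sinh_le {x y M : ℝ} (hxy : y ≤ x) (hx : |x| ≤ M) (hy : |y| ≤ M) :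
    Real.sinh x - Real.sinh y ≤ (x - y) * Real.cosh M := by
  set u := (x - y) / 2 with hu_def
  set v := (x + y) / 2 with hv_def
  have hu : 0 ≤ u := by
    rw [hu_def]; linarith
  have hM : 0 ≤ M := le_trans (abs_nonneg x) hx
  have hid : Real.sinh x - Real.sinh y = 2 * Real.sinh u * Real.cosh v := by
    have e1 := Real.sinh_add v u
    have e2 := Real.sinh_sub v u
    rw [show v + u = x by rw [hu_def, hv_def]; ring] at e1
    rw [show v - u = y by rw [hu_def, hv_def]; ring] at e2
    rw [e1, e2]; ring
  have h1 : Real.sinh u ≤ u * Real.cosh u := sinh_le_mul_cosh hu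
  have h2 : Real.cosh u * Real.cosh v ≤ Real.cosh M := by
    have hstep : Real.cosh u * Real.cosh v ≤ Real.cosh (u + |v|) := by
      rw [Real.cosh_add, Real.cosh_abs]
      have := mul_nonneg (Real.sinh_nonneg_iff.2 hu) (Real.sinh_nonneg_iff.2 (abs_nonneg v))
      linarith
    have huv : u + |v| ≤ M := by
      rcases le_total 0 v with h | h
      · rw [abs_of_nonneg h]
        have : u + v = x := by rw [hu_def, hv_def]; ring
        rw [this]
        exact le_trans (le_abs_self x) hx
      · rw [abs_of_nonpos h]
        have : u - v = -y := by rw [hu_def, hv_def]; ring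
        rw [sub_eq_add_neg] at this
        rw [this]
        exact le_trans (neg_le_abs y) hy
    refine le_trans hstep ?_
    rw [Real.cosh_le_cosh, abs_of_nonneg (by positivity), abs_of_nonneg hM]
    exact huv
  have hcv : 0 < Real.cosh v := Real.cosh_pos _
  have hcu : 0 < Real.cosh u := Real.cosh_pos _
  have hxy2 : x - y = 2 * u := by rw [hu_def]; ring
  rw [hid, hxy2]
  nlinarith [mul_nonneg (sub_nonneg.2 h1) hcv.le, mul_nonneg hu (sub_nonneg.2 h2)]

set_option maxHeartbeats 1000000 in
/-- interaction of a shock `α < 0` and a rarefaction `β > 0` with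
`|α| ≤ q`, `β ≤ q`: the reflected wave `ε₁` is a shock with
`|ε₁| ≤ c(q)·min{|α|, β}` where `c(q) = (cosh q − 1)/(cosh q + 1)`, and the
amounts of shocks and rarefactions of the incoming family decrease. -/
theorem shock_rarefaction_interaction (q α β ε₁ ε₂ : ℝ) (hq : 0 < q)
    (hα : α < 0) (hβ : 0 < β) (hαq : |α| ≤ q) (hβq : β ≤ q)
    (h1 : ε₂ - ε₁ = α + β)
    (h2 : waveH ε₁ + waveH ε₂ = waveH α + waveH β) :
    ε₁ < 0 ∧
    |ε₁| ≤ (Real.cosh q - 1) / (Real.cosh q + 1) * min |α| β ∧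
    (ε₂ ≤ 0 → |ε₂| < |α|) ∧
    (0 ≤ ε₂ → ε₂ < β) := by
  have hWα : waveH α = Real.sinh α := if_neg (not_le.2 hα)
  have hWβ : waveH β = β := if_pos hβ.le
  set C := Real.cosh q with hC_def
  have hC1 : 1 < C := Real.one_lt_cosh.2 hq.ne'
  set c := (C - 1) / (C + 1) with hc_def
  have hc0 : 0 ≤ c := div_nonneg (by linarith) (by linarith)
  have hc1 : c < 1 := by
    rw [hc_def, div_lt_one (by linarith)]; linarith
  have hcC : (1 - c) * C = 1 + c := by
    rw [hc_def]; field_simp; ring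
  have hsinhα : Real.sinh α < α := Real.sinh_lt_self_iff.2 hα
  -- Step 1: ε₁ < 0
  have hε₁ : ε₁ < 0 := by
    by_contra hcon
    push_neg at hcon
    have hW1 : waveH ε₁ = ε₁ := if_pos hcon
    rcases le_or_gt 0 ε₂ with hε₂ | hε₂
    · have hW2 : waveH ε₂ = ε₂ := if_pos hε₂
      rw [hW1, hW2, hWα, hWβ] at h2
      linarith
    · have hW2 : waveH ε₂ = Real.sinh ε₂ := if_neg (not_le.2 hε₂)
      rw [hW1, hW2, hWα, hWβ] at h2
      have hmono : Real.sinh (α + β) ≤ Real.sinh ε₂ :=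
        Real.sinh_le_sinh.2 (by linarith)
      have e1 := Real.sinh_add (α + β / 2) (β / 2)
      have e2 := Real.sinh_sub (α + β / 2) (β / 2)
      rw [show α + β / 2 + β / 2 = α + β by ring] at e1
      rw [show α + β / 2 - β / 2 = α by ring] at e2
      have hsh : β / 2 < Real.sinh (β / 2) := Real.self_lt_sinh_iff.2 (by linarith)
      have hch : 1 ≤ Real.cosh (α + β / 2) := Real.one_le_cosh _
      nlinarith [Real.sinh_pos_iff.2 (show (0:ℝ) < β / 2 by linarith)]
  have hW1 : waveH ε₁ = Real.sinh ε₁ := if_neg (not_le.2 hε₁)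
  -- notation
  set a := -α with ha_def
  set e := -ε₁ with he_def
  have ha : 0 < a := by rw [ha_def]; linarith
  have he : 0 < e := by rw [he_def]; linarith
  have habsα : |α| = a := abs_of_neg hα
  have habs1 : |ε₁| = e := abs_of_neg hε₁
  have haq : a ≤ q := habsα ▸ hαq
  have hsa : Real.sinh α = -Real.sinh a := by
    rw [ha_def, Real.sinh_neg, neg_neg]
  have hs1 : Real.sinh ε₁ = -Real.sinh e := by
    rw [he_def, Real.sinh_neg, neg_neg]
  -- auxiliary: the bound `e ≤ c * a` follows from `sinh e + e ≤ sinh a - a`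
  have key_ea : Real.sinh e + e ≤ Real.sinh a - a → e ≤ c * a := by
    intro hkey
    by_contra hcon
    push_neg at hcon
    have hca_le_a : c * a ≤ a := by nlinarith
    have hmvt : Real.sinh a - Real.sinh (c * a) ≤ (a - c * a) * C := by
      apply sinh_sub_sinh_le hca_le_a
      · rw [abs_of_pos ha]; exact haq
      · rw [abs_of_nonneg (mul_nonneg hc0 ha.le)]
        exact le_trans hca_le_a haq
    have hCa : (a - c * a) * C = (1 + c) * a := by
      rw [show a - c * a = (1 - c) * a by ring]
      rw [show (1 - c) * a * C = ((1 - c) * C) * a by ring, hcC]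
    rw [hCa] at hmvt
    -- so sinh a - a ≤ sinh (c*a) + c*a
    have h3 : Real.sinh a - a ≤ Real.sinh (c * a) + c * a := by linarith
    have h4 : Real.sinh (c * a) < Real.sinh e := Real.sinh_lt_sinh.2 hcon
    linarith
  -- main case analysis on the sign of ε₂
  rcases le_or_gt 0 ε₂ with hε₂ | hε₂
  · -- transmitted wave is a rarefaction
    have hW2 : waveH ε₂ = ε₂ := if_pos hε₂
    rw [hW1, hW2, hWα, hWβ] at h2
    -- sinh e + e = sinh a - a
    have heq : Real.sinh e + e = Real.sinh a - a := by
      rw [hs1, hsa] at h2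
      have hε₂eq : ε₂ = ε₁ + α + β := by linarith
      linarith
    have hea : e ≤ c * a := key_ea heq.le
    have hβa : a + e ≤ β := by
      have : ε₂ = ε₁ + α + β := by linarith
      linarith
    refine ⟨hε₁, ?_, ?_, ?_⟩
    · rw [habs1, habsα]
      rcases le_total a β with h | h
      · rw [min_eq_left h]; exact hea
      · rw [min_eq_right h]
        linarith
    · intro h
      have : ε₂ = 0 := le_antisymm h hε₂
      rw [this, abs_zero, habsα]; exact ha
    · intro _
      have : ε₂ = ε₁ + α + β := by linarith
      rw [this]; linarith
  · -- transmitted wave is a shock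
    have hW2 : waveH ε₂ = Real.sinh ε₂ := if_neg (not_le.2 hε₂)
    rw [hW1, hW2, hWα, hWβ] at h2
    set f := -ε₂ with hf_def
    have hf : 0 < f := by rw [hf_def]; linarith
    have hs2 : Real.sinh ε₂ = -Real.sinh f := by
      rw [hf_def, Real.sinh_neg, neg_neg]
    have hfeq : f = e + a - β := by
      rw [hf_def, he_def, ha_def]; linarith
    -- sinh e + sinh f = sinh a - β
    have heq : Real.sinh e + Real.sinh f = Real.sinh a - β := by
      rw [hs1, hs2, hsa] at h2; linarith
    -- sinh e + e ≤ sinh a - a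
    have hkey : Real.sinh e + e ≤ Real.sinh a - a := by
      have hsf : f ≤ Real.sinh f := Real.self_le_sinh_iff.2 hf.le
      have : β = e + a - f := by rw [hfeq]; ring
      rw [this] at heq
      linarith
    have hea : e ≤ c * a := key_ea hkey
    -- e ≤ c * β
    have heβ : e ≤ c * β := by
      by_contra hcon
      push_neg at hcon
      have hcβ0 : 0 ≤ c * β := mul_nonneg hc0 hβ.le
      have hcβ1 : c * β ≤ β := by
        have := mul_le_mul_of_nonneg_right hc1.le hβ.le
        linarith [this, one_mul β]
      have hexp : (1 - c) * β = β - c * β := by ring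
      have hy_le : a - (1 - c) * β ≤ a := by linarith
      have hmvt : Real.sinh a - Real.sinh (a - (1 - c) * β) ≤ ((1 - c) * β) * C := by
        have := sinh_sub_sinh_le (x := a) (y := a - (1 - c) * β) (M := q) hy_le
          (by rw [abs_of_pos ha]; exact haq)
          (by
            rw [abs_le]
            exact ⟨by linarith, by linarith⟩)

        rw [show a - (a - (1 - c) * β) = (1 - c) * β by ring] at this
        exact this
      have hC2 : ((1 - c) * β) * C = (1 + c) * β := by
        rw [show (1 - c) * β * C = ((1 - c) * C) * β by ring, hcC]
      rw [hC2] at hmvt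
      have hscβ : c * β ≤ Real.sinh (c * β) :=
        Real.self_le_sinh_iff.2 (mul_nonneg hc0 hβ.le)
      -- lower bound for Φ(c*β)
      have hlow : Real.sinh a - β ≤ Real.sinh (c * β) + Real.sinh (c * β + a - β) := by
        rw [show c * β + a - β = a - (1 - c) * β by ring]
        linarith
      -- monotonicity contradiction
      have hm1 : Real.sinh (c * β) < Real.sinh e := Real.sinh_lt_sinh.2 hcon
      have hm2 : Real.sinh (c * β + a - β) < Real.sinh f := by
        rw [hfeq]
        exact Real.sinh_lt_sinh.2 (by linarith)
      linarith
    refine ⟨hε₁, ?_, ?_, ?_⟩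
    · rw [habs1, habsα]
      rcases le_total a β with h | h
      · rw [min_eq_left h]; exact hea
      · rw [min_eq_right h]; exact heβ
    · intro _
      have habs2 : |ε₂| = f := abs_of_neg hε₂
      rw [habs2, habsα]
      have hse : 0 < Real.sinh e := Real.sinh_pos_iff.2 he
      have : Real.sinh f < Real.sinh a := by linarith
      exact Real.sinh_lt_sinh.1 this
    · intro h
      exact absurd (lt_of_le_of_lt h hε₂) (lt_irrefl 0)
end
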